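/- Let G be a snark of oddness two, F a 2-factor of G with precisely two odd cycles, and M a maximum matching in F. If the main component of H = G − M is a Θ-graph, then G has a proper (Z_4 × Z_2)-coloring. -/

import Mathlib

open SimpleGraph

variable {V : Type*}

/-- A cubic graph: every vertex has exactly `3` neighbours. -/
def IsCubic (G : SimpleGraph V) : Prop :=
  ∀ v : V, (G.neighborSet v).ncard = 3

/-- Two edges (as elements of `Sym2 V`) are adjacent if they are distinct and
share an endpoint. -/
def EdgesAdj (e₁ e₂ : Sym2 V) : Prop :=
  e₁ ≠ e₂ ∧ ∃ v : V, v ∈ e₁ ∧ v ∈ e₂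

/-- `G` has a proper `3`-edge-coloring. -/
def HasProper3EdgeColoring (G : SimpleGraph V) : Prop :=
  ∃ c : Sym2 V → Fin 3,
    ∀ e₁ ∈ G.edgeSet, ∀ e₂ ∈ G.edgeSet, EdgesAdj e₁ e₂ → c e₁ ≠ c e₂

/-- A bridgeless graph: no edge is a bridge. -/
def IsBridgeless (G : SimpleGraph V) : Prop :=
  ∀ e ∈ G.edgeSet, ¬ G.IsBridge e

/-- A snark: a connected bridgeless cubic graph admitting no proper
`3`-edge-coloring. -/
def IsSnark (G : SimpleGraph V) : Prop :=
  G.Connected ∧ IsBridgeless G ∧ IsCubic G ∧ ¬ HasProper3EdgeColoring G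

/-- A proper abelian coloring of `G` by the abelian group `A`: every edge gets a
nonzero color, adjacent edges get distinct colors, and at every vertex the
colors of the incident edges sum to zero. -/
def IsProperAbelianColoring {A : Type*} [AddCommGroup A]
    (G : SimpleGraph V) (σ : Sym2 V → A) : Prop :=
  (∀ e ∈ G.edgeSet, σ e ≠ 0) ∧
  (∀ e₁ ∈ G.edgeSet, ∀ e₂ ∈ G.edgeSet, EdgesAdj e₁ e₂ → σ e₁ ≠ σ e₂) ∧
  (∀ v : V, ∑ᶠ e ∈ G.incidenceSet v, σ e = 0)

/-- `F` is a `2`-factor of `G`: a spanning `2`-regular subgraph. -/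
def IsTwoFactor (G F : SimpleGraph V) : Prop :=
  F ≤ G ∧ ∀ v : V, (F.neighborSet v).ncard = 2

/-- `M` is a matching contained in the edge set of `F`. -/
def IsMatchingIn (M : Set (Sym2 V)) (F : SimpleGraph V) : Prop :=
  M ⊆ F.edgeSet ∧ ∀ e₁ ∈ M, ∀ e₂ ∈ M, e₁ ≠ e₂ → ¬ ∃ v : V, v ∈ e₁ ∧ v ∈ e₂

/-- A perfect matching in `F`: a matching covering every vertex. -/
def IsPerfectMatchingIn (M : Set (Sym2 V)) (F : SimpleGraph V) : Prop :=
  IsMatchingIn M F ∧ ∀ v : V, ∃ e ∈ M, v ∈ e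

/-- A maximum matching in `F`: a matching of maximum cardinality. -/
def IsMaximumMatchingIn (M : Set (Sym2 V)) (F : SimpleGraph V) : Prop :=
  IsMatchingIn M F ∧ ∀ M' : Set (Sym2 V), IsMatchingIn M' F → M'.ncard ≤ M.ncard

/-- A `3`-vertex of `H`: a vertex of degree `3`. -/
def IsThreeVertex (H : SimpleGraph V) (v : V) : Prop := (H.neighborSet v).ncard = 3

/-- A `2`-vertex of `H`: a vertex of degree `2`. -/
def IsTwoVertex (H : SimpleGraph V) (v : V) : Prop := (H.neighborSet v).ncard = 2

/-- An `F`-path in `H`: a (nontrivial) path in `H` whose two end-vertices are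
`3`-vertices of `H`, whose interior vertices are all `2`-vertices of `H`, and
whose two end-edges belong to `F`. -/
structure FPathIn (H F : SimpleGraph V) where
  a : V
  b : V
  walk : H.Walk a b
  isPath : walk.IsPath
  len_pos : 0 < walk.length
  ends_three : IsThreeVertex H a ∧ IsThreeVertex H b
  interior_two : ∀ w ∈ walk.support, w ≠ a → w ≠ b → IsTwoVertex H w
  end_edges : ∀ e ∈ walk.edges, (a ∈ e ∨ b ∈ e) → e ∈ F.edgeSet

/-- The vertices of an `F`-path. -/
def FPathIn.supp {H F : SimpleGraph V} (P : FPathIn H F) : Set V :=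
  {v | v ∈ P.walk.support}

/-- The edges of an `F`-path. -/
def FPathIn.edgeSet {H F : SimpleGraph V} (P : FPathIn H F) : Set (Sym2 V) :=
  {e | e ∈ P.walk.edges}

/-- An `F`-matching of `H`: a collection of pairwise vertex-disjoint `F`-paths
such that every `3`-vertex of `H` lies on (exactly) one of them. -/
def IsFMatching (H F : SimpleGraph V) (Ps : Set (FPathIn H F)) : Prop :=
  (∀ P ∈ Ps, ∀ Q ∈ Ps, P ≠ Q → Disjoint P.supp Q.supp) ∧
  (∀ v : V, IsThreeVertex H v → ∃ P ∈ Ps, v ∈ P.supp)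

/-- The set of edges lying on the paths of an `F`-matching. -/
def FMatchingEdges {H F : SimpleGraph V} (Ps : Set (FPathIn H F)) : Set (Sym2 V) :=
  {e | ∃ P ∈ Ps, e ∈ P.walk.edges}

/-- The `F`-complement of an `F`-matching: the subgraph of `H` induced by the
edges of `H` not lying on the paths of `Ps`. -/
def FComplement {H F : SimpleGraph V} (Ps : Set (FPathIn H F)) : SimpleGraph V :=
  H.deleteEdges (FMatchingEdges Ps)

/-- The number of `3`-vertices of `H` lying on a connected component `c` of `K`. -/
noncomputable def threeCount (H : SimpleGraph V) {K : SimpleGraph V} (c : K.ConnectedComponent) : ℕ :=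
  {v ∈ c.supp | IsThreeVertex H v}.ncard

/-- The graph `K` (an `F`-complement, whose nontrivial components are the
loops) is `3`-even w.r.t. `H`: every component carries an even number of
`3`-vertices of `H`. -/
def IsThreeEvenComplement (H K : SimpleGraph V) : Prop :=
  ∀ c : K.ConnectedComponent, Even (threeCount H c)

/-- A component of `K` is a `3`-odd loop if it carries an odd number of
`3`-vertices of `H`. -/
def Is3OddLoop (H : SimpleGraph V) {K : SimpleGraph V} (c : K.ConnectedComponent) : Prop :=
  Odd (threeCount H c)

/-- The number of odd components (odd cycles, for a `2`-factor) of `F`. -/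
noncomputable def oddCompCount (F : SimpleGraph V) : ℕ :=
  {c : F.ConnectedComponent | Odd c.supp.ncard}.ncard

/-- The number of even components (even cycles, for a `2`-factor) of `F`. -/
noncomputable def evenCompCount (F : SimpleGraph V) : ℕ :=
  {c : F.ConnectedComponent | Even c.supp.ncard}.ncard

/-- The oddness of `G`: the minimum number of odd cycles in a `2`-factor of `G`. -/
noncomputable def oddness (G : SimpleGraph V) : ℕ :=
  sInf {n : ℕ | ∃ F : SimpleGraph V, IsTwoFactor G F ∧ oddCompCount F = n}

/-- `v` lies on an odd component (odd cycle) of `F`. -/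
def OnOddCycle (F : SimpleGraph V) (v : V) : Prop :=
  Odd ((F.connectedComponentMk v).supp.ncard)

/-- A simple `F`-matching: an `F`-matching such that on each of its paths the
only edges lying on odd cycles of `F` are the edges incident to the
end-vertices. -/
def IsSimpleFMatching (H F : SimpleGraph V) (Ps : Set (FPathIn H F)) : Prop :=
  IsFMatching H F Ps ∧
  ∀ P ∈ Ps, ∀ e ∈ P.walk.edges,
    (e ∈ F.edgeSet ∧ ∀ w ∈ e, OnOddCycle F w) → (P.a ∈ e ∨ P.b ∈ e)

/-- The set `C ⊆ V` carries a `Θ`-graph structure in `H`: two distinct vertices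
joined by three internally disjoint paths whose union is exactly the part of
`H` on `C`. -/
def IsThetaOn (H : SimpleGraph V) (C : Set V) : Prop :=
  ∃ a b : V, a ≠ b ∧ ∃ p q r : H.Walk a b,
    p.IsPath ∧ q.IsPath ∧ r.IsPath ∧ p ≠ q ∧ p ≠ r ∧ q ≠ r ∧
    (∀ w ∈ p.support, w ∈ q.support → w = a ∨ w = b) ∧
    (∀ w ∈ p.support, w ∈ r.support → w = a ∨ w = b) ∧
    (∀ w ∈ q.support, w ∈ r.support → w = a ∨ w = b) ∧
    C = {w | w ∈ p.support ∨ w ∈ q.support ∨ w ∈ r.support} ∧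
    (∀ e ∈ H.edgeSet, (∀ w ∈ e, w ∈ C) → e ∈ p.edges ∨ e ∈ q.edges ∨ e ∈ r.edges)

/-- The set `C ⊆ V` carries a kayak-paddle graph structure in `H`: two
vertex-disjoint cycles joined by a path, their union being exactly the part of
`H` on `C`. -/
def IsKayakPaddleOn (H : SimpleGraph V) (C : Set V) : Prop :=
  ∃ a b : V, ∃ (c₁ : H.Walk a a) (c₂ : H.Walk b b) (p : H.Walk a b),
    c₁.IsCycle ∧ c₂.IsCycle ∧ p.IsPath ∧
    (∀ w ∈ c₁.support, w ∉ c₂.support) ∧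
    (∀ w ∈ p.support, w ∈ c₁.support → w = a) ∧
    (∀ w ∈ p.support, w ∈ c₂.support → w = b) ∧
    C = {w | w ∈ c₁.support ∨ w ∈ c₂.support ∨ w ∈ p.support} ∧
    (∀ e ∈ H.edgeSet, (∀ w ∈ e, w ∈ C) → e ∈ c₁.edges ∨ e ∈ c₂.edges ∨ e ∈ p.edges)

/-- The set `C ⊆ V` carries an even cycle of `H` whose vertices and edges are
exactly the part of `H` on `C`. -/
def IsEvenCycleOn (H : SimpleGraph V) (C : Set V) : Prop :=
  ∃ a : V, ∃ W : H.Walk a a, W.IsCycle ∧ Even W.length ∧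
    C = {w | w ∈ W.support} ∧
    (∀ e ∈ H.edgeSet, (∀ w ∈ e, w ∈ C) → e ∈ W.edges)

/-- `Meven` is a perfect matching of the even part `F_even` of the `2`-factor
`F`: a matching of `F` using only edges on even cycles and covering all
vertices of even cycles. -/
def IsPerfectMatchingOfEvenPart (Meven : Set (Sym2 V)) (F : SimpleGraph V) : Prop :=
  IsMatchingIn Meven F ∧
  (∀ e ∈ Meven, ∀ w ∈ e, ¬ OnOddCycle F w) ∧
  (∀ v : V, ¬ OnOddCycle F v → ∃ e ∈ Meven, v ∈ e)

/-- Two odd components `c₁`, `c₂` of `F` are linked in `H_odd = G − M_even`: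
there is a path of `H_odd` from `c₁` to `c₂` all of whose interior vertices
avoid odd cycles of `F` (i.e. are `2`-vertices of `H_odd`). -/
def OddCompLinked (G F : SimpleGraph V) (Meven : Set (Sym2 V))
    (c₁ c₂ : F.ConnectedComponent) : Prop :=
  ∃ u v : V, u ∈ c₁.supp ∧ v ∈ c₂.supp ∧
    ∃ W : (G.deleteEdges Meven).Walk u v, W.IsPath ∧ 0 < W.length ∧
      ∀ w ∈ W.support, w ≠ u → w ≠ v → ¬ OnOddCycle F w

/-- The odd-cycle-incidence graph `K_odd`: vertices are the odd cycles of `F`,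
two of them being adjacent iff they are linked by a path of
`H_odd = G − M_even` with all interior vertices `2`-vertices of `H_odd`
(this is `H_odd` with the edges of `F_odd` contracted and the `2`-vertices
suppressed). -/
def Kodd (G F : SimpleGraph V) (Meven : Set (Sym2 V)) :
    SimpleGraph {c : F.ConnectedComponent // Odd c.supp.ncard} where
  Adj c₁ c₂ := c₁ ≠ c₂ ∧
    (OddCompLinked G F Meven c₁.1 c₂.1 ∨ OddCompLinked G F Meven c₂.1 c₁.1)
  symm := ⟨fun c₁ c₂ h => ⟨h.1.symm, h.2.symm⟩⟩
  loopless := ⟨fun c h => h.1 rfl⟩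

/-- The set of edges of `K` lying on the connected component `c` of `K`. -/
def compEdgeSet (K : SimpleGraph V) (c : K.ConnectedComponent) : Set (Sym2 V) :=
  {e ∈ K.edgeSet | ∃ w, w ∈ e ∧ w ∈ c.supp}

/-- The set `E_Ps` of end-edges of the paths of an `F`-matching `Ps`. -/
def endEdges {H F : SimpleGraph V} (Ps : Set (FPathIn H F)) : Set (Sym2 V) :=
  {e | ∃ P ∈ Ps, e ∈ P.walk.edges ∧ (P.a ∈ e ∨ P.b ∈ e)}

/-- The edge set attached to a vertex of the loop-cycle-incidence graph `B`:
a component of `F − E_Ps`, a loop of the `F`-complement `ℒ`, or a path of `Ps`. -/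
def bEdgeSet (F : SimpleGraph V) {H : SimpleGraph V} (Ps : Set (FPathIn H F)) :
    (F.deleteEdges (endEdges Ps)).ConnectedComponent ⊕
      ((FComplement Ps).ConnectedComponent ⊕ ↥Ps) → Set (Sym2 V)
  | Sum.inl C => compEdgeSet (F.deleteEdges (endEdges Ps)) C
  | Sum.inr (Sum.inl c) => compEdgeSet (FComplement Ps) c
  | Sum.inr (Sum.inr P) => FPathIn.edgeSet P.1

/-- The loop-cycle-incidence graph `B`: a bipartite graph on
`𝒞* ⊕ (ℒ ⊕ Ps)`, where `𝒞*` is the set of components of `F − E_Ps`, `ℒ` the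
set of components (loops) of the `F`-complement and `Ps` the paths of the
`F`-matching; a component of `F − E_Ps` is adjacent to a loop/path iff they
share an edge of `G`. -/
def LoopCycleIncidence (F : SimpleGraph V) {H : SimpleGraph V}
    (Ps : Set (FPathIn H F)) :
    SimpleGraph ((F.deleteEdges (endEdges Ps)).ConnectedComponent ⊕
      ((FComplement Ps).ConnectedComponent ⊕ ↥Ps)) where
  Adj a b := ((a.isLeft ∧ b.isRight) ∨ (a.isRight ∧ b.isLeft)) ∧
    ∃ e, e ∈ bEdgeSet F Ps a ∧ e ∈ bEdgeSet F Ps b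
  symm := by
    refine ⟨?_⟩
    rintro a b ⟨hs, e, h₁, h₂⟩
    exact ⟨by tauto, e, h₂, h₁⟩
  loopless := by
    refine ⟨?_⟩
    rintro a ⟨hs, -⟩
    rcases a with a | a <;> simp_all

/-- Remove a set of vertices from a graph (keeping them as isolated vertices):
used to form `B − Ps`. -/
def removeVerts {W : Type*} (B : SimpleGraph W) (S : Set W) : SimpleGraph W where
  Adj a b := B.Adj a b ∧ a ∉ S ∧ b ∉ S
  symm := ⟨fun a b h => ⟨h.1.symm, h.2.2, h.2.1⟩⟩
  loopless := ⟨fun a h => B.loopless.irrefl a h.1⟩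

/-- The vertices of `B` corresponding to the paths of `Ps`. -/
def PVerts (F : SimpleGraph V) {H : SimpleGraph V} (Ps : Set (FPathIn H F)) :
    Set ((F.deleteEdges (endEdges Ps)).ConnectedComponent ⊕
      ((FComplement Ps).ConnectedComponent ⊕ ↥Ps)) :=
  {x | ∃ P : ↥Ps, x = Sum.inr (Sum.inr P)}

/-- A permutation snark: a snark having a `2`-factor consisting of precisely
two chordless cycles. -/
def IsPermutationSnark (G : SimpleGraph V) : Prop :=
  IsSnark G ∧ ∃ F : SimpleGraph V, IsTwoFactor G F ∧
    Nat.card F.ConnectedComponent = 2 ∧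
    ∀ u v : V, G.Adj u v → ¬ F.Adj u v →
      F.connectedComponentMk u ≠ F.connectedComponentMk v

/-- The graph obtained from `H` (all of whose vertices have degree `2` or `3`)
by suppressing the degree-`2` vertices is `3`-edge-colorable: there is a
`3`-coloring of the edges which is constant through `2`-vertices and proper at
`3`-vertices. -/
def SuppressedThreeEdgeColorable (H : SimpleGraph V) : Prop :=
  ∃ c : Sym2 V → Fin 3,
    (∀ v : V, IsThreeVertex H v →
      ∀ e₁ ∈ H.incidenceSet v, ∀ e₂ ∈ H.incidenceSet v, e₁ ≠ e₂ → c e₁ ≠ c e₂) ∧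
    (∀ v : V, IsTwoVertex H v →
      ∀ e₁ ∈ H.incidenceSet v, ∀ e₂ ∈ H.incidenceSet v, c e₁ = c e₂)

/-- `e_r(G)`: the minimum cardinality of a set of pairwise non-adjacent edges
of `G` whose removal, followed by suppression of the resulting `2`-vertices,
yields a `3`-edge-colorable (cubic) graph. -/
noncomputable def edgeReductionNumber (G : SimpleGraph V) : ℕ :=
  sInf {n : ℕ | ∃ R : Set (Sym2 V), IsMatchingIn R G ∧
    SuppressedThreeEdgeColorable (G.deleteEdges R) ∧ R.ncard = n}


namespace S3

variable {V : Type*}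

abbrev Col := ZMod 4 × ZMod 2

def cA : Col := (0,1)
def cB : Col := (2,1)
def cC : Col := (2,0)
def cX : Col := (1,0)

open Classical in
noncomputable def sig (F : SimpleGraph V) (M S₁ S₂ : Set (Sym2 V)) (e : Sym2 V) : Col :=
  (if e ∈ M then cB else if e ∈ F.edgeSet then cA else cC) +
  (if e ∈ S₁ then (if e ∈ F.edgeSet then -cX else cX)
   else if e ∈ S₂ then (if e ∈ F.edgeSet then cX else -cX) else 0)

section evals

variable (F : SimpleGraph V) (M S₁ S₂ : Set (Sym2 V)) (e : Sym2 V)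

lemma sig_M (h : e ∈ M) (h1 : e ∉ S₁) (h2 : e ∉ S₂) : sig F M S₁ S₂ e = cB := by
  simp [sig, h, h1, h2]

lemma sig_F (h : e ∉ M) (hF : e ∈ F.edgeSet) (h1 : e ∉ S₁) (h2 : e ∉ S₂) :
    sig F M S₁ S₂ e = cA := by simp [sig, h, hF, h1, h2]

lemma sig_N (h : e ∉ M) (hF : e ∉ F.edgeSet) (h1 : e ∉ S₁) (h2 : e ∉ S₂) :
    sig F M S₁ S₂ e = cC := by simp [sig, h, hF, h1, h2]

lemma sig_F_S1 (h : e ∉ M) (hF : e ∈ F.edgeSet) (h1 : e ∈ S₁) :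
    sig F M S₁ S₂ e = cA - cX := by simp [sig, h, hF, h1]; rfl

lemma sig_N_S1 (h : e ∉ M) (hF : e ∉ F.edgeSet) (h1 : e ∈ S₁) :
    sig F M S₁ S₂ e = cC + cX := by simp [sig, h, hF, h1]

lemma sig_F_S2 (h : e ∉ M) (hF : e ∈ F.edgeSet) (h1 : e ∉ S₁) (h2 : e ∈ S₂) :
    sig F M S₁ S₂ e = cA + cX := by simp [sig, h, hF, h1, h2]

lemma sig_N_S2 (h : e ∉ M) (hF : e ∉ F.edgeSet) (h1 : e ∉ S₁) (h2 : e ∈ S₂) :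
    sig F M S₁ S₂ e = cC - cX := by simp [sig, h, hF, h1, h2]; rfl

end evals

/-- The combinatorial structure on a pair of edge sets needed to build the coloring. -/
structure ShiftSetup (G F : SimpleGraph V) (M S₁ S₂ : Set (Sym2 V)) : Prop where
  subG : ∀ e ∈ S₁ ∪ S₂, e ∈ G.edgeSet
  notM : ∀ e ∈ S₁ ∪ S₂, e ∉ M
  disj : ∀ e, e ∈ S₁ → e ∉ S₂
  matched : ∀ v : V, (∃ e ∈ M, v ∈ e) →
    (∀ e ∈ S₁ ∪ S₂, v ∉ e) ∨
    (∃ e f : Sym2 V, ((e ∈ S₁ ∧ f ∈ S₁) ∨ (e ∈ S₂ ∧ f ∈ S₂)) ∧ e ∈ F.edgeSet ∧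
      f ∉ F.edgeSet ∧ v ∈ e ∧ v ∈ f ∧ ∀ g ∈ S₁ ∪ S₂, v ∈ g → g = e ∨ g = f)
  unmatched : ∀ v : V, (¬ ∃ e ∈ M, v ∈ e) →
    ∃ e f : Sym2 V, e ∈ S₁ ∧ f ∈ S₂ ∧ v ∈ e ∧ v ∈ f ∧ (e ∈ F.edgeSet ↔ f ∉ F.edgeSet) ∧
      (∀ g ∈ S₁, v ∈ g → g = e) ∧ (∀ g ∈ S₂, v ∈ g → g = f)

lemma edge_form {G : SimpleGraph V} {e : Sym2 V} (he : e ∈ G.edgeSet) {v : V} (hv : v ∈ e) :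
    ∃ u, G.Adj v u ∧ e = s(v, u) := by
  revert he hv
  refine Sym2.ind (fun x y he hv => ?_) e
  rcases Sym2.mem_iff.mp hv with rfl | rfl
  · exact ⟨y, he, rfl⟩
  · exact ⟨x, he.symm, Sym2.eq_swap⟩

/-- Full local structure of a cubic graph with a 2-factor at a vertex. -/
lemma vstruct {G F : SimpleGraph V} (hG : IsCubic G) (hle : F ≤ G)
    (hreg : ∀ v, (F.neighborSet v).ncard = 2) (v : V) :
    ∃ u₁ u₂ u₃ : V, u₁ ≠ u₂ ∧ u₁ ≠ u₃ ∧ u₂ ≠ u₃ ∧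
      F.Adj v u₁ ∧ F.Adj v u₂ ∧ G.Adj v u₃ ∧ ¬ F.Adj v u₃ ∧
      (∀ u, G.Adj v u → u = u₁ ∨ u = u₂ ∨ u = u₃) ∧
      (∀ u, F.Adj v u → u = u₁ ∨ u = u₂) := by
  obtain ⟨u₁, u₂, h12, hF2⟩ := Set.ncard_eq_two.mp (hreg v)
  have hF1 : F.Adj v u₁ := by
    have : u₁ ∈ F.neighborSet v := by rw [hF2]; exact Set.mem_insert _ _
    exact this
  have hFu2 : F.Adj v u₂ := by
    have : u₂ ∈ F.neighborSet v := by rw [hF2]; exact Set.mem_insert_of_mem _ rfl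
    exact this
  have hGfin : (G.neighborSet v).Finite :=
    Set.finite_of_ncard_ne_zero (by rw [hG v]; omega)
  have hnsub : ¬ (G.neighborSet v ⊆ F.neighborSet v) := by
    intro hsub
    have hc := Set.ncard_le_ncard hsub (by rw [hF2]; exact Set.toFinite _)
    rw [hG v, hreg v] at hc; omega
  obtain ⟨u₃, hu₃G, hu₃F⟩ := Set.not_subset.mp hnsub
  have h13 : u₁ ≠ u₃ := fun h => hu₃F (by rw [← h]; rw [hF2]; exact Set.mem_insert _ _)
  have h23 : u₂ ≠ u₃ := fun h => hu₃F (by rw [← h]; rw [hF2]; exact Set.mem_insert_of_mem _ rfl)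
  have hsub2 : ({u₁, u₂, u₃} : Set V) ⊆ G.neighborSet v := by
    intro u hu
    rcases hu with rfl | rfl | rfl
    · exact hle hF1
    · exact hle hFu2
    · exact hu₃G
  have hcard : ({u₁, u₂, u₃} : Set V).ncard = 3 :=
    Set.ncard_eq_three.mpr ⟨u₁, u₂, u₃, h12, h13, h23, rfl⟩
  have heq : ({u₁, u₂, u₃} : Set V) = G.neighborSet v :=
    Set.eq_of_subset_of_ncard_le hsub2 (by rw [hG v, hcard]) hGfin
  refine ⟨u₁, u₂, u₃, h12, h13, h23, hF1, hFu2, hu₃G, fun h => hu₃F h, ?_, ?_⟩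
  · intro u hu
    have : u ∈ ({u₁, u₂, u₃} : Set V) := by rw [heq]; exact hu
    simpa using this
  · intro u hu
    have : u ∈ F.neighborSet v := hu
    rw [hF2] at this; simpa using this


def VertexGood (G F : SimpleGraph V) (M S₁ S₂ : Set (Sym2 V)) (v : V) : Prop :=
  ∃ E₁ E₂ E₃ : Sym2 V,
    G.incidenceSet v = {E₁, E₂, E₃} ∧ E₁ ≠ E₂ ∧ E₁ ≠ E₃ ∧ E₂ ≠ E₃ ∧
    sig F M S₁ S₂ E₁ ≠ sig F M S₁ S₂ E₂ ∧ sig F M S₁ S₂ E₁ ≠ sig F M S₁ S₂ E₃ ∧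
    sig F M S₁ S₂ E₂ ≠ sig F M S₁ S₂ E₃ ∧
    sig F M S₁ S₂ E₁ ≠ 0 ∧ sig F M S₁ S₂ E₂ ≠ 0 ∧ sig F M S₁ S₂ E₃ ≠ 0 ∧
    sig F M S₁ S₂ E₁ + sig F M S₁ S₂ E₂ + sig F M S₁ S₂ E₃ = 0

section cores

variable {G F : SimpleGraph V} {M S₁ S₂ : Set (Sym2 V)}
variable {v w z t : V}

lemma matched_core (hM : IsMatchingIn M F) (hs : ShiftSetup G F M S₁ S₂)
    (hwz : w ≠ z) (hwt : w ≠ t) (hzt : z ≠ t)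
    (hFw : F.Adj v w) (hFz : F.Adj v z) (hNFt : ¬ F.Adj v t)
    (hinc : G.incidenceSet v = {s(v,w), s(v,z), s(v,t)})
    (hemM : s(v,w) ∈ M) : VertexGood G F M S₁ S₂ v := by
  have hvw : v ∈ s(v,w) := Sym2.mem_mk_left v w
  have hvz : v ∈ s(v,z) := Sym2.mem_mk_left v z
  have hvt : v ∈ s(v,t) := Sym2.mem_mk_left v t
  have hEwz : s(v,w) ≠ s(v,z) := fun h => hwz (Sym2.congr_right.mp h)
  have hEwt : s(v,w) ≠ s(v,t) := fun h => hwt (Sym2.congr_right.mp h)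
  have hEzt : s(v,z) ≠ s(v,t) := fun h => hzt (Sym2.congr_right.mp h)
  have hFEw : s(v,w) ∈ F.edgeSet := F.mem_edgeSet.mpr hFw
  have hFEz : s(v,z) ∈ F.edgeSet := F.mem_edgeSet.mpr hFz
  have hNFEt : s(v,t) ∉ F.edgeSet := fun h => hNFt (F.mem_edgeSet.mp h)
  have hzM : s(v,z) ∉ M := fun h => hM.2 _ hemM _ h hEwz ⟨v, hvw, hvz⟩
  have htM : s(v,t) ∉ M := fun h => hNFEt (hM.1 h)
  have hwS1 : s(v,w) ∉ S₁ := fun h => hs.notM _ (Set.mem_union_left _ h) hemM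
  have hwS2 : s(v,w) ∉ S₂ := fun h => hs.notM _ (Set.mem_union_right _ h) hemM
  have hσw : sig F M S₁ S₂ s(v,w) = cB := sig_M _ _ _ _ _ hemM hwS1 hwS2
  have hid : ∀ g, g ∈ G.edgeSet → v ∈ g → g = s(v,w) ∨ g = s(v,z) ∨ g = s(v,t) := by
    intro g hg hvg
    have : g ∈ G.incidenceSet v := ⟨hg, hvg⟩
    rw [hinc] at this
    simpa using this
  rcases hs.matched v ⟨_, hemM, hvw⟩ with hnone | ⟨e, f, hside, heF, hfF, hve, hvf, huniq⟩
  · have hz1 : s(v,z) ∉ S₁ := fun h => hnone _ (Set.mem_union_left _ h) hvz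
    have hz2 : s(v,z) ∉ S₂ := fun h => hnone _ (Set.mem_union_right _ h) hvz
    have ht1 : s(v,t) ∉ S₁ := fun h => hnone _ (Set.mem_union_left _ h) hvt
    have ht2 : s(v,t) ∉ S₂ := fun h => hnone _ (Set.mem_union_right _ h) hvt
    have hσz : sig F M S₁ S₂ s(v,z) = cA := sig_F _ _ _ _ _ hzM hFEz hz1 hz2
    have hσt : sig F M S₁ S₂ s(v,t) = cC := sig_N _ _ _ _ _ htM hNFEt ht1 ht2
    exact ⟨_, _, _, hinc, hEwz, hEwt, hEzt, by
      simp only [hσw, hσz, hσt]; decide, by simp only [hσw, hσz, hσt]; decide,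
      by simp only [hσw, hσz, hσt]; decide, by simp only [hσw, hσz, hσt]; decide,
      by simp only [hσw, hσz, hσt]; decide, by simp only [hσw, hσz, hσt]; decide,
      by simp only [hσw, hσz, hσt]; decide⟩
  · have heU : e ∈ S₁ ∪ S₂ := by
      rcases hside with ⟨h, _⟩ | ⟨h, _⟩
      · exact Set.mem_union_left _ h
      · exact Set.mem_union_right _ h
    have hfU : f ∈ S₁ ∪ S₂ := by
      rcases hside with ⟨_, h⟩ | ⟨_, h⟩
      · exact Set.mem_union_left _ h
      · exact Set.mem_union_right _ h
    have heM : e ∉ M := hs.notM _ heU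
    have hfM : f ∉ M := hs.notM _ hfU
    have hee : e = s(v,z) := by
      rcases hid e (hs.subG _ heU) hve with rfl | h | rfl
      · exact absurd hemM heM
      · exact h
      · exact absurd heF hNFEt
    have hff : f = s(v,t) := by
      rcases hid f (hs.subG _ hfU) hvf with rfl | rfl | h
      · exact absurd hemM hfM
      · exact absurd hFEz hfF
      · exact h
    subst hee; subst hff
    rcases hside with ⟨h1, h2⟩ | ⟨h1, h2⟩
    · have hσz : sig F M S₁ S₂ s(v,z) = cA - cX := sig_F_S1 _ _ _ _ _ hzM hFEz h1
      have hσt : sig F M S₁ S₂ s(v,t) = cC + cX := sig_N_S1 _ _ _ _ _ htM hNFEt h2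
      exact ⟨_, _, _, hinc, hEwz, hEwt, hEzt, by
        simp only [hσw, hσz, hσt]; decide, by simp only [hσw, hσz, hσt]; decide,
        by simp only [hσw, hσz, hσt]; decide, by simp only [hσw, hσz, hσt]; decide,
        by simp only [hσw, hσz, hσt]; decide, by simp only [hσw, hσz, hσt]; decide,
        by simp only [hσw, hσz, hσt]; decide⟩
    · have hz1 : s(v,z) ∉ S₁ := fun h => hs.disj _ h h1
      have ht1 : s(v,t) ∉ S₁ := fun h => hs.disj _ h h2
      have hσz : sig F M S₁ S₂ s(v,z) = cA + cX := sig_F_S2 _ _ _ _ _ hzM hFEz hz1 h1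
      have hσt : sig F M S₁ S₂ s(v,t) = cC - cX := sig_N_S2 _ _ _ _ _ htM hNFEt ht1 h2
      exact ⟨_, _, _, hinc, hEwz, hEwt, hEzt, by
        simp only [hσw, hσz, hσt]; decide, by simp only [hσw, hσz, hσt]; decide,
        by simp only [hσw, hσz, hσt]; decide, by simp only [hσw, hσz, hσt]; decide,
        by simp only [hσw, hσz, hσt]; decide, by simp only [hσw, hσz, hσt]; decide,
        by simp only [hσw, hσz, hσt]; decide⟩

lemma unm_core1 (hs : ShiftSetup G F M S₁ S₂)
    (hwz : w ≠ z) (hwt : w ≠ t) (hzt : z ≠ t)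
    (hFw : F.Adj v w) (hFz : F.Adj v z) (hNFt : ¬ F.Adj v t)
    (hinc : G.incidenceSet v = {s(v,w), s(v,z), s(v,t)})
    (hm : ¬ ∃ e ∈ M, v ∈ e)
    (he1 : s(v,w) ∈ S₁) (hf2 : s(v,t) ∈ S₂)
    (huniq1 : ∀ g ∈ S₁, v ∈ g → g = s(v,w)) (huniq2 : ∀ g ∈ S₂, v ∈ g → g = s(v,t)) :
    VertexGood G F M S₁ S₂ v := by
  have hvw : v ∈ s(v,w) := Sym2.mem_mk_left v w
  have hvz : v ∈ s(v,z) := Sym2.mem_mk_left v z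
  have hvt : v ∈ s(v,t) := Sym2.mem_mk_left v t
  have hEwz : s(v,w) ≠ s(v,z) := fun h => hwz (Sym2.congr_right.mp h)
  have hEwt : s(v,w) ≠ s(v,t) := fun h => hwt (Sym2.congr_right.mp h)
  have hEzt : s(v,z) ≠ s(v,t) := fun h => hzt (Sym2.congr_right.mp h)
  have hFEw : s(v,w) ∈ F.edgeSet := F.mem_edgeSet.mpr hFw
  have hFEz : s(v,z) ∈ F.edgeSet := F.mem_edgeSet.mpr hFz
  have hNFEt : s(v,t) ∉ F.edgeSet := fun h => hNFt (F.mem_edgeSet.mp h)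
  have hwM : s(v,w) ∉ M := fun h => hm ⟨_, h, hvw⟩
  have hzM : s(v,z) ∉ M := fun h => hm ⟨_, h, hvz⟩
  have htM : s(v,t) ∉ M := fun h => hm ⟨_, h, hvt⟩
  have hz1 : s(v,z) ∉ S₁ := fun h => hEwz ((huniq1 _ h hvz).symm)
  have hz2 : s(v,z) ∉ S₂ := fun h => hEzt (huniq2 _ h hvz)
  have ht1 : s(v,t) ∉ S₁ := fun h => hEwt ((huniq1 _ h hvt).symm)
  have hσw : sig F M S₁ S₂ s(v,w) = cA - cX := sig_F_S1 _ _ _ _ _ hwM hFEw he1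
  have hσz : sig F M S₁ S₂ s(v,z) = cA := sig_F _ _ _ _ _ hzM hFEz hz1 hz2
  have hσt : sig F M S₁ S₂ s(v,t) = cC - cX := sig_N_S2 _ _ _ _ _ htM hNFEt ht1 hf2
  exact ⟨_, _, _, hinc, hEwz, hEwt, hEzt, by
    simp only [hσw, hσz, hσt]; decide, by simp only [hσw, hσz, hσt]; decide,
    by simp only [hσw, hσz, hσt]; decide, by simp only [hσw, hσz, hσt]; decide,
    by simp only [hσw, hσz, hσt]; decide, by simp only [hσw, hσz, hσt]; decide,
    by simp only [hσw, hσz, hσt]; decide⟩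

lemma unm_core2 (hs : ShiftSetup G F M S₁ S₂)
    (hwz : w ≠ z) (hwt : w ≠ t) (hzt : z ≠ t)
    (hFw : F.Adj v w) (hFz : F.Adj v z) (hNFt : ¬ F.Adj v t)
    (hinc : G.incidenceSet v = {s(v,w), s(v,z), s(v,t)})
    (hm : ¬ ∃ e ∈ M, v ∈ e)
    (he1 : s(v,t) ∈ S₁) (hf2 : s(v,w) ∈ S₂)
    (huniq1 : ∀ g ∈ S₁, v ∈ g → g = s(v,t)) (huniq2 : ∀ g ∈ S₂, v ∈ g → g = s(v,w)) :
    VertexGood G F M S₁ S₂ v := by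
  have hvw : v ∈ s(v,w) := Sym2.mem_mk_left v w
  have hvz : v ∈ s(v,z) := Sym2.mem_mk_left v z
  have hvt : v ∈ s(v,t) := Sym2.mem_mk_left v t
  have hEwz : s(v,w) ≠ s(v,z) := fun h => hwz (Sym2.congr_right.mp h)
  have hEwt : s(v,w) ≠ s(v,t) := fun h => hwt (Sym2.congr_right.mp h)
  have hEzt : s(v,z) ≠ s(v,t) := fun h => hzt (Sym2.congr_right.mp h)
  have hFEw : s(v,w) ∈ F.edgeSet := F.mem_edgeSet.mpr hFw
  have hFEz : s(v,z) ∈ F.edgeSet := F.mem_edgeSet.mpr hFz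
  have hNFEt : s(v,t) ∉ F.edgeSet := fun h => hNFt (F.mem_edgeSet.mp h)
  have hwM : s(v,w) ∉ M := fun h => hm ⟨_, h, hvw⟩
  have hzM : s(v,z) ∉ M := fun h => hm ⟨_, h, hvz⟩
  have htM : s(v,t) ∉ M := fun h => hm ⟨_, h, hvt⟩
  have hw1 : s(v,w) ∉ S₁ := fun h => hEwt (huniq1 _ h hvw)
  have hz1 : s(v,z) ∉ S₁ := fun h => hEzt (huniq1 _ h hvz)
  have hz2 : s(v,z) ∉ S₂ := fun h => hwz ((Sym2.congr_right.mp (huniq2 _ h hvz)).symm)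
  have hσw : sig F M S₁ S₂ s(v,w) = cA + cX := sig_F_S2 _ _ _ _ _ hwM hFEw hw1 hf2
  have hσz : sig F M S₁ S₂ s(v,z) = cA := sig_F _ _ _ _ _ hzM hFEz hz1 hz2
  have hσt : sig F M S₁ S₂ s(v,t) = cC + cX := sig_N_S1 _ _ _ _ _ htM hNFEt he1
  exact ⟨_, _, _, hinc, hEwz, hEwt, hEzt, by
    simp only [hσw, hσz, hσt]; decide, by simp only [hσw, hσz, hσt]; decide,
    by simp only [hσw, hσz, hσt]; decide, by simp only [hσw, hσz, hσt]; decide,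
    by simp only [hσw, hσz, hσt]; decide, by simp only [hσw, hσz, hσt]; decide,
    by simp only [hσw, hσz, hσt]; decide⟩

end cores

lemma vertex_good {G F : SimpleGraph V} {M S₁ S₂ : Set (Sym2 V)}
    (hG : IsCubic G) (hle : F ≤ G) (hreg : ∀ v, (F.neighborSet v).ncard = 2)
    (hM : IsMatchingIn M F) (hs : ShiftSetup G F M S₁ S₂) (v : V) :
    VertexGood G F M S₁ S₂ v := by
  obtain ⟨u₁, u₂, u₃, h12, h13, h23, hF1, hF2, hG3, hNF3, hclassG, hclassF⟩ :=
    vstruct hG hle hreg v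
  have hinc : G.incidenceSet v = {s(v,u₁), s(v,u₂), s(v,u₃)} := by
    ext e
    constructor
    · rintro ⟨he, hv⟩
      obtain ⟨u, hu, rfl⟩ := edge_form he hv
      rcases hclassG u hu with rfl | rfl | rfl <;> simp
    · intro he
      simp only [Set.mem_insert_iff, Set.mem_singleton_iff] at he
      rcases he with rfl | rfl | rfl
      · exact ⟨G.mem_edgeSet.mpr (hle hF1), Sym2.mem_mk_left v u₁⟩
      · exact ⟨G.mem_edgeSet.mpr (hle hF2), Sym2.mem_mk_left v u₂⟩
      · exact ⟨G.mem_edgeSet.mpr hG3, Sym2.mem_mk_left v u₃⟩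
  have hinc' : G.incidenceSet v = {s(v,u₂), s(v,u₁), s(v,u₃)} := by
    rw [hinc]; exact Set.insert_comm _ _ _
  by_cases hm : ∃ e ∈ M, v ∈ e
  · obtain ⟨em, hemM, hvem⟩ := hm
    obtain ⟨ww, hFww, rfl⟩ := edge_form (hM.1 hemM) hvem
    rcases hclassF ww hFww with rfl | rfl
    · exact matched_core hM hs h12 h13 h23 hF1 hF2 hNF3 hinc hemM
    · exact matched_core hM hs h12.symm h23 h13 hF2 hF1 hNF3 hinc' hemM
  · obtain ⟨e, f, he1, hf2, hve, hvf, hiff, huniq1, huniq2⟩ := hs.unmatched v hm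
    have heG : e ∈ G.edgeSet := hs.subG _ (Set.mem_union_left _ he1)
    have hfG : f ∈ G.edgeSet := hs.subG _ (Set.mem_union_right _ hf2)
    have hid : ∀ g, g ∈ G.edgeSet → v ∈ g → g = s(v,u₁) ∨ g = s(v,u₂) ∨ g = s(v,u₃) := by
      intro g hg hvg
      have : g ∈ G.incidenceSet v := ⟨hg, hvg⟩
      rw [hinc] at this
      simpa using this
    have hFE1 : s(v,u₁) ∈ F.edgeSet := F.mem_edgeSet.mpr hF1
    have hFE2 : s(v,u₂) ∈ F.edgeSet := F.mem_edgeSet.mpr hF2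
    have hNFE3 : s(v,u₃) ∉ F.edgeSet := fun h => hNF3 (F.mem_edgeSet.mp h)
    by_cases heF : e ∈ F.edgeSet
    · have hfNF : f ∉ F.edgeSet := hiff.mp heF
      have hff : f = s(v,u₃) := by
        rcases hid f hfG hvf with rfl | rfl | h
        · exact absurd hFE1 hfNF
        · exact absurd hFE2 hfNF
        · exact h
      subst hff
      rcases hid e heG hve with rfl | rfl | rfl
      · exact unm_core1 hs h12 h13 h23 hF1 hF2 hNF3 hinc hm he1 hf2 huniq1 huniq2
      · exact unm_core1 hs h12.symm h23 h13 hF2 hF1 hNF3 hinc' hm he1 hf2 huniq1 huniq2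
      · exact absurd heF hNFE3
    · have hfF : f ∈ F.edgeSet := by
        by_contra hfNF
        exact heF (hiff.mpr hfNF)
      have hee : e = s(v,u₃) := by
        rcases hid e heG hve with rfl | rfl | h
        · exact absurd hFE1 heF
        · exact absurd hFE2 heF
        · exact h
      subst hee
      rcases hid f hfG hvf with rfl | rfl | h
      · exact unm_core2 hs h12 h13 h23 hF1 hF2 hNF3 hinc hm he1 hf2 huniq1 huniq2
      · exact unm_core2 hs h12.symm h23 h13 hF2 hF1 hNF3 hinc' hm he1 hf2 huniq1 huniq2
      · exact absurd (h ▸ hfF) hNFE3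

lemma coloring_of_shiftSetup {G F : SimpleGraph V} {M S₁ S₂ : Set (Sym2 V)}
    (hG : IsCubic G) (hle : F ≤ G) (hreg : ∀ v, (F.neighborSet v).ncard = 2)
    (hM : IsMatchingIn M F) (hs : ShiftSetup G F M S₁ S₂) :
    ∃ σ : Sym2 V → ZMod 4 × ZMod 2, IsProperAbelianColoring G σ := by
  classical
  refine ⟨sig F M S₁ S₂, ?_, ?_, ?_⟩
  · intro e he
    obtain ⟨x, hx⟩ : ∃ x, x ∈ e := ⟨e.out.1, Sym2.out_fst_mem e⟩
    obtain ⟨E₁, E₂, E₃, hinc, _, _, _, _, _, _, hn1, hn2, hn3, _⟩ :=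
      vertex_good hG hle hreg hM hs x
    have : e ∈ G.incidenceSet x := ⟨he, hx⟩
    rw [hinc] at this
    rcases this with rfl | this
    · exact hn1
    rcases this with rfl | rfl
    · exact hn2
    · exact hn3
  · rintro e₁ h₁ e₂ h₂ ⟨hne, x, hx1, hx2⟩
    obtain ⟨E₁, E₂, E₃, hinc, _, _, _, hd12, hd13, hd23, _, _, _, _⟩ :=
      vertex_good hG hle hreg hM hs x
    have m₁ : e₁ ∈ ({E₁, E₂, E₃} : Set (Sym2 V)) := hinc ▸ (⟨h₁, hx1⟩ : e₁ ∈ G.incidenceSet x)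
    have m₂ : e₂ ∈ ({E₁, E₂, E₃} : Set (Sym2 V)) := hinc ▸ (⟨h₂, hx2⟩ : e₂ ∈ G.incidenceSet x)
    simp only [Set.mem_insert_iff, Set.mem_singleton_iff] at m₁ m₂
    rcases m₁ with rfl | rfl | rfl <;> rcases m₂ with rfl | rfl | rfl <;>
      first
        | exact absurd rfl hne
        | exact hd12 | exact hd13 | exact hd23
        | exact hd12.symm | exact hd13.symm | exact hd23.symm
  · intro v
    obtain ⟨E₁, E₂, E₃, hinc, hd12, hd13, hd23, _, _, _, _, _, _, hsum⟩ :=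
      vertex_good hG hle hreg hM hs v
    rw [hinc]
    have hset : ({E₁, E₂, E₃} : Set (Sym2 V)) =
        (({E₁, E₂, E₃} : Finset (Sym2 V)) : Set (Sym2 V)) := by simp
    rw [hset, finsum_mem_coe_finset]
    rw [Finset.sum_insert (by simp [hd12, hd13]),
      Finset.sum_insert (by simp [hd23]), Finset.sum_singleton, ← add_assoc]
    exact hsum


section walks

variable {G : SimpleGraph V}

lemma mem_support_of_mem_edges' {a b v : V} (w : G.Walk a b) {e : Sym2 V}
    (he : e ∈ w.edges) (hv : v ∈ e) : v ∈ w.support := by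
  revert he hv
  refine Sym2.ind (fun x y he hv => ?_) e
  rcases Sym2.mem_iff.mp hv with rfl | rfl
  · exact w.fst_mem_support_of_mem_edges he
  · exact w.snd_mem_support_of_mem_edges he

lemma edges_at_start {a b : V} (w : G.Walk a b) (hw : w.IsPath) (hl : 0 < w.length) :
    ∃ e₀, e₀ ∈ w.edges ∧ a ∈ e₀ ∧ ∀ g ∈ w.edges, a ∈ g → g = e₀ := by
  cases w with
  | nil => simp at hl
  | @cons _ c _ h p =>
    refine ⟨s(a, c), by simp, Sym2.mem_mk_left _ _, ?_⟩
    intro g hg hag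
    rw [SimpleGraph.Walk.edges_cons, List.mem_cons] at hg
    rcases hg with rfl | hg
    · rfl
    · exact absurd (mem_support_of_mem_edges' p hg hag)
        ((SimpleGraph.Walk.cons_isPath_iff h p).mp hw).2

lemma edges_at_end {a b : V} (w : G.Walk a b) (hw : w.IsPath) (hl : 0 < w.length) :
    ∃ e₀, e₀ ∈ w.edges ∧ b ∈ e₀ ∧ ∀ g ∈ w.edges, b ∈ g → g = e₀ := by
  obtain ⟨e₀, h1, h2, h3⟩ := edges_at_start w.reverse hw.reverse
    (by rwa [SimpleGraph.Walk.length_reverse])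
  rw [SimpleGraph.Walk.edges_reverse, List.mem_reverse] at h1
  refine ⟨e₀, h1, h2, ?_⟩
  intro g hg hbg
  exact h3 g (by rwa [SimpleGraph.Walk.edges_reverse, List.mem_reverse]) hbg

lemma edges_at_interior {a b : V} (w : G.Walk a b) :
    w.IsPath → ∀ v ∈ w.support, v ≠ a → v ≠ b →
    ∃ e f, e ∈ w.edges ∧ f ∈ w.edges ∧ e ≠ f ∧ v ∈ e ∧ v ∈ f ∧
      ∀ g ∈ w.edges, v ∈ g → g = e ∨ g = f := by
  induction w with
  | nil =>
    intro _ v hv hva _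
    simp only [SimpleGraph.Walk.support_nil, List.mem_singleton] at hv
    exact absurd hv hva
  | @cons a' c b' h p ih =>
    intro hw v hv hva hvb
    have hp : p.IsPath := hw.of_cons
    have hanp : a' ∉ p.support := ((SimpleGraph.Walk.cons_isPath_iff h p).mp hw).2
    rw [SimpleGraph.Walk.support_cons, List.mem_cons] at hv
    rcases hv with rfl | hvp
    · exact absurd rfl hva
    by_cases hvc : v = c
    · subst hvc
      have hlp : 0 < p.length := by
        cases p with
        | nil => exact absurd rfl hvb
        | cons _ _ => simp
      obtain ⟨f₀, hf₀p, hcf₀, hf₀uniq⟩ := edges_at_start p hp hlp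
      refine ⟨s(a', v), f₀, by simp, ?_, ?_, Sym2.mem_mk_right _ _, hcf₀, ?_⟩
      · rw [SimpleGraph.Walk.edges_cons]; exact List.mem_cons_of_mem _ hf₀p
      · intro hef
        exact hanp (mem_support_of_mem_edges' p (hef ▸ hf₀p) (Sym2.mem_mk_left _ _))
      · intro g hg hvg
        rw [SimpleGraph.Walk.edges_cons, List.mem_cons] at hg
        rcases hg with rfl | hg
        · exact Or.inl rfl
        · exact Or.inr (hf₀uniq g hg hvg)
    · obtain ⟨e, f, he, hf, hef, hve, hvf, hcl⟩ := ih hp v hvp hvc hvb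
      refine ⟨e, f, ?_, ?_, hef, hve, hvf, ?_⟩
      · rw [SimpleGraph.Walk.edges_cons]; exact List.mem_cons_of_mem _ he
      · rw [SimpleGraph.Walk.edges_cons]; exact List.mem_cons_of_mem _ hf
      · intro g hg hvg
        rw [SimpleGraph.Walk.edges_cons, List.mem_cons] at hg
        rcases hg with rfl | hg
        · rcases Sym2.mem_iff.mp hvg with rfl | rfl
          · exact absurd rfl hva
          · exact absurd rfl hvc
        · exact hcl g hg hvg

lemma eq_cons_nil_of_edge {a b : V} (w : G.Walk a b) (hw : w.IsPath)
    (hmem : s(a,b) ∈ w.edges) :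
    ∃ (h : G.Adj a b), w = SimpleGraph.Walk.cons h SimpleGraph.Walk.nil := by
  cases w with
  | nil => simp at hmem
  | @cons _ c _ h p =>
    rw [SimpleGraph.Walk.edges_cons, List.mem_cons] at hmem
    rcases hmem with he | hmem
    · have hbc : b = c := Sym2.congr_right.mp he
      subst hbc
      have hpnil : p = SimpleGraph.Walk.nil :=
        SimpleGraph.Walk.isPath_iff_eq_nil.mp hw.of_cons
      exact ⟨h, by rw [hpnil]⟩
    · exact absurd (mem_support_of_mem_edges' p hmem (Sym2.mem_mk_left a b))
        ((SimpleGraph.Walk.cons_isPath_iff h p).mp hw).2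

lemma paths_edge_disjoint {a b : V} (hab : a ≠ b) {p q : G.Walk a b}
    (hp : p.IsPath) (hq : q.IsPath) (hpq : p ≠ q)
    (hd : ∀ w ∈ p.support, w ∈ q.support → w = a ∨ w = b) :
    ∀ g, g ∈ p.edges → g ∈ q.edges → False := by
  intro g hgp hgq
  have hgE : g ∈ G.edgeSet := p.edges_subset_edgeSet hgp
  have hgab : g = s(a, b) := by
    revert hgE hgp hgq
    refine Sym2.ind (fun x y hgp hgq hgE => ?_) g
    have hxy : x ≠ y := G.ne_of_adj hgE
    have hx : x = a ∨ x = b := hd x (p.fst_mem_support_of_mem_edges hgp)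
      (q.fst_mem_support_of_mem_edges hgq)
    have hy : y = a ∨ y = b := hd y (p.snd_mem_support_of_mem_edges hgp)
      (q.snd_mem_support_of_mem_edges hgq)
    rcases hx with rfl | rfl <;> rcases hy with rfl | rfl
    · exact absurd rfl hxy
    · rfl
    · exact Sym2.eq_swap
    · exact absurd rfl hxy
  subst hgab
  obtain ⟨h₁, hp1⟩ := eq_cons_nil_of_edge p hp hgp
  obtain ⟨h₂, hq1⟩ := eq_cons_nil_of_edge q hq hgq
  exact hpq (by rw [hp1, hq1])

end walks

lemma pigeon_four {α : Type*} {x₁ x₂ x₃ w u₁ u₂ u₃ : α}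
    (hx12 : x₁ ≠ x₂) (hx13 : x₁ ≠ x₃) (hx23 : x₂ ≠ x₃)
    (h1w : x₁ ≠ w) (h2w : x₂ ≠ w) (h3w : x₃ ≠ w)
    (c1 : x₁ = u₁ ∨ x₁ = u₂ ∨ x₁ = u₃)
    (c2 : x₂ = u₁ ∨ x₂ = u₂ ∨ x₂ = u₃)
    (c3 : x₃ = u₁ ∨ x₃ = u₂ ∨ x₃ = u₃)
    (cw : w = u₁ ∨ w = u₂ ∨ w = u₃) : False := by
  rcases cw with rfl | rfl | rfl <;> rcases c1 with rfl | rfl | rfl <;>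
    rcases c2 with rfl | rfl | rfl <;> rcases c3 with rfl | rfl | rfl <;> simp_all

lemma pigeon_three_two {α : Type*} {a₁ a₂ a₃ e f : α}
    (h12 : a₁ ≠ a₂) (h13 : a₁ ≠ a₃) (h23 : a₂ ≠ a₃)
    (c1 : a₁ = e ∨ a₁ = f) (c2 : a₂ = e ∨ a₂ = f) (c3 : a₃ = e ∨ a₃ = f) : False := by
  rcases c1 with rfl | rfl <;> rcases c2 with rfl | rfl <;> rcases c3 with rfl | rfl <;> simp_all

lemma unmatched_threeVertex {G : SimpleGraph V} {M : Set (Sym2 V)} (hG : IsCubic G)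
    {v : V} (hm : ¬ ∃ e ∈ M, v ∈ e) : IsThreeVertex (G.deleteEdges M) v := by
  have hset : (G.deleteEdges M).neighborSet v = G.neighborSet v := by
    ext u
    simp only [SimpleGraph.mem_neighborSet, SimpleGraph.deleteEdges_adj]
    exact ⟨fun h => h.1, fun h => ⟨h, fun hM => hm ⟨_, hM, Sym2.mem_mk_left _ _⟩⟩⟩
  unfold IsThreeVertex
  rw [hset]
  exact hG v

lemma order_pair {G F : SimpleGraph V} {v u₁ u₂ u₃ wm x y : V}
    (h12 : u₁ ≠ u₂) (h13 : u₁ ≠ u₃) (h23 : u₂ ≠ u₃)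
    (hF1 : F.Adj v u₁) (hF2 : F.Adj v u₂) (hNF3 : ¬ F.Adj v u₃)
    (hclassG : ∀ u, G.Adj v u → u = u₁ ∨ u = u₂ ∨ u = u₃)
    (hclassF : ∀ u, F.Adj v u → u = u₁ ∨ u = u₂)
    (hFwm : F.Adj v wm)
    (hx : G.Adj v x) (hy : G.Adj v y)
    (hxy : x ≠ y) (hxw : x ≠ wm) (hyw : y ≠ wm) :
    (F.Adj v x ∧ ¬ F.Adj v y) ∨ (F.Adj v y ∧ ¬ F.Adj v x) := by
  rcases hclassF wm hFwm with rfl | rfl <;>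
    rcases hclassG x hx with rfl | rfl | rfl <;>
    rcases hclassG y hy with rfl | rfl | rfl <;>
    first
      | exact absurd rfl hxy
      | exact absurd rfl hxw
      | exact absurd rfl hyw
      | exact Or.inl ⟨hF1, hNF3⟩
      | exact Or.inl ⟨hF2, hNF3⟩
      | exact Or.inr ⟨hF1, hNF3⟩
      | exact Or.inr ⟨hF2, hNF3⟩

lemma choosePQ {α : Type*} {p q r : α} {SN EN : α → Prop}
    (hpq : p ≠ q) (hpr : p ≠ r) (hqr : q ≠ r)
    (hSNe : SN p ∨ SN q ∨ SN r)
    (hSNu : ¬(SN p ∧ SN q) ∧ ¬(SN p ∧ SN r) ∧ ¬(SN q ∧ SN r))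
    (hENe : EN p ∨ EN q ∨ EN r)
    (hENu : ¬(EN p ∧ EN q) ∧ ¬(EN p ∧ EN r) ∧ ¬(EN q ∧ EN r)) :
    ∃ P Q, (P = p ∨ P = q ∨ P = r) ∧ (Q = p ∨ Q = q ∨ Q = r) ∧ P ≠ Q ∧
      SN P ∧ ¬ SN Q ∧ ((EN P ∧ ¬ EN Q) ∨ (¬ EN P ∧ EN Q)) := by
  rcases hSNe with hS | hS | hS
  · by_cases hEq : EN q
    · exact ⟨p, q, Or.inl rfl, Or.inr (Or.inl rfl), hpq, hS,
        fun h => hSNu.1 ⟨hS, h⟩, Or.inr ⟨fun h => hENu.1 ⟨h, hEq⟩, hEq⟩⟩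
    · by_cases hEp : EN p
      · exact ⟨p, q, Or.inl rfl, Or.inr (Or.inl rfl), hpq, hS,
          fun h => hSNu.1 ⟨hS, h⟩, Or.inl ⟨hEp, hEq⟩⟩
      · have hEr : EN r := by
          rcases hENe with h | h | h
          exacts [absurd h hEp, absurd h hEq, h]
        exact ⟨p, r, Or.inl rfl, Or.inr (Or.inr rfl), hpr, hS,
          fun h => hSNu.2.1 ⟨hS, h⟩, Or.inr ⟨hEp, hEr⟩⟩
  · by_cases hEp : EN p
    · exact ⟨q, p, Or.inr (Or.inl rfl), Or.inl rfl, Ne.symm hpq, hS,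
        fun h => hSNu.1 ⟨h, hS⟩, Or.inr ⟨fun h => hENu.1 ⟨hEp, h⟩, hEp⟩⟩
    · by_cases hEq : EN q
      · exact ⟨q, p, Or.inr (Or.inl rfl), Or.inl rfl, Ne.symm hpq, hS,
          fun h => hSNu.1 ⟨h, hS⟩, Or.inl ⟨hEq, hEp⟩⟩
      · have hEr : EN r := by
          rcases hENe with h | h | h
          exacts [absurd h hEp, absurd h hEq, h]
        exact ⟨q, r, Or.inr (Or.inl rfl), Or.inr (Or.inr rfl), hqr, hS,
          fun h => hSNu.2.2 ⟨hS, h⟩, Or.inr ⟨hEq, hEr⟩⟩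
  · by_cases hEp : EN p
    · exact ⟨r, p, Or.inr (Or.inr rfl), Or.inl rfl, Ne.symm hpr, hS,
        fun h => hSNu.2.1 ⟨h, hS⟩, Or.inr ⟨fun h => hENu.2.1 ⟨hEp, h⟩, hEp⟩⟩
    · by_cases hEq : EN q
      · exact ⟨r, q, Or.inr (Or.inr rfl), Or.inr (Or.inl rfl), Ne.symm hqr, hS,
          fun h => hSNu.2.2 ⟨h, hS⟩, Or.inr ⟨fun h => hENu.2.2 ⟨hEq, h⟩, hEq⟩⟩
      · have hEr : EN r := by
          rcases hENe with h | h | h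
          exacts [absurd h hEp, absurd h hEq, h]
        exact ⟨r, p, Or.inr (Or.inr rfl), Or.inl rfl, Ne.symm hpr, hS,
          fun h => hSNu.2.1 ⟨h, hS⟩, Or.inl ⟨hEr, hEp⟩⟩

def LocalGood (F K : SimpleGraph V) (M : Set (Sym2 V))
    (c : K.ConnectedComponent) (S₁ S₂ : Set (Sym2 V)) : Prop :=
  (∀ e ∈ S₁ ∪ S₂, e ∈ K.edgeSet ∧ ∀ x ∈ e, x ∈ c.supp) ∧
  (∀ e, e ∈ S₁ → e ∉ S₂) ∧
  (∀ v : V, (∃ e ∈ M, v ∈ e) →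
    (∀ e ∈ S₁ ∪ S₂, v ∉ e) ∨
    (∃ e f : Sym2 V, ((e ∈ S₁ ∧ f ∈ S₁) ∨ (e ∈ S₂ ∧ f ∈ S₂)) ∧ e ∈ F.edgeSet ∧
      f ∉ F.edgeSet ∧ v ∈ e ∧ v ∈ f ∧ ∀ g ∈ S₁ ∪ S₂, v ∈ g → g = e ∨ g = f)) ∧
  (∀ v ∈ c.supp, (¬ ∃ e ∈ M, v ∈ e) →
    ∃ e f : Sym2 V, e ∈ S₁ ∧ f ∈ S₂ ∧ v ∈ e ∧ v ∈ f ∧ (e ∈ F.edgeSet ↔ f ∉ F.edgeSet) ∧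
      (∀ g ∈ S₁, v ∈ g → g = e) ∧ (∀ g ∈ S₂, v ∈ g → g = f))

lemma perComponent {G F H : SimpleGraph V} {M : Set (Sym2 V)}
    (hH : H = G.deleteEdges M)
    (hG : IsCubic G) (hle : F ≤ G) (hreg : ∀ v, (F.neighborSet v).ncard = 2)
    (hM : IsMatchingIn M F)
    (c : H.ConnectedComponent)
    (htheta : IsThetaOn H c.supp) :
    ∃ S₁ S₂ : Set (Sym2 V), LocalGood F H M c S₁ S₂ := by
  classical
  obtain ⟨a, b, hab, p, q, r, hp, hq, hr, hpq, hpr, hqr, hdpq, hdpr, hdqr, hsupp, hcover⟩ :=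
    htheta
  have hHle : H ≤ G := by rw [hH]; exact SimpleGraph.deleteEdges_le M
  have hHedge : ∀ {e : Sym2 V}, e ∈ H.edgeSet → e ∈ G.edgeSet ∧ e ∉ M := by
    intro e he
    rw [hH, SimpleGraph.edgeSet_deleteEdges] at he
    exact he
  have hsuppcl : ∀ x ∈ c.supp, ∀ y, H.Adj x y → y ∈ c.supp := by
    intro x hx y hxy
    rw [SimpleGraph.ConnectedComponent.mem_supp_iff] at hx ⊢
    rw [← hx]
    exact SimpleGraph.ConnectedComponent.eq.mpr hxy.symm.reachable
  have hsubp : ∀ x ∈ p.support, x ∈ c.supp := fun x hx => by rw [hsupp]; exact Or.inl hx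
  have hsubq : ∀ x ∈ q.support, x ∈ c.supp := fun x hx => by
    rw [hsupp]; exact Or.inr (Or.inl hx)
  have hsubr : ∀ x ∈ r.support, x ∈ c.supp := fun x hx => by
    rw [hsupp]; exact Or.inr (Or.inr hx)
  have hac : a ∈ c.supp := hsubp a p.start_mem_support
  have hbc : b ∈ c.supp := hsubp b p.end_mem_support
  have hcov : ∀ g, g ∈ H.edgeSet → (∃ x, x ∈ g ∧ x ∈ c.supp) →
      g ∈ p.edges ∨ g ∈ q.edges ∨ g ∈ r.edges := by
    intro g
    refine Sym2.ind (fun s t hg hx => ?_) g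
    have hadj : H.Adj s t := H.mem_edgeSet.mp hg
    obtain ⟨x, hxg, hxc⟩ := hx
    have hst : s ∈ c.supp ∧ t ∈ c.supp := by
      rcases Sym2.mem_iff.mp hxg with rfl | rfl
      · exact ⟨hxc, hsuppcl _ hxc _ hadj⟩
      · exact ⟨hsuppcl _ hxc _ hadj.symm, hxc⟩
    refine hcover _ hg ?_
    intro y hy
    rcases Sym2.mem_iff.mp hy with rfl | rfl
    · exact hst.1
    · exact hst.2
  have hlp : 0 < p.length := Nat.pos_of_ne_zero fun h => hab (p.eq_of_length_eq_zero h)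
  have hlq : 0 < q.length := Nat.pos_of_ne_zero fun h => hab (q.eq_of_length_eq_zero h)
  have hlr : 0 < r.length := Nat.pos_of_ne_zero fun h => hab (r.eq_of_length_eq_zero h)
  obtain ⟨fp, hfpm, hafp, hfpu⟩ := edges_at_start p hp hlp
  obtain ⟨fq, hfqm, hafq, hfqu⟩ := edges_at_start q hq hlq
  obtain ⟨fr, hfrm, hafr, hfru⟩ := edges_at_start r hr hlr
  obtain ⟨gp, hgpm, hbgp, hgpu⟩ := edges_at_end p hp hlp
  obtain ⟨gq, hgqm, hbgq, hgqu⟩ := edges_at_end q hq hlq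
  obtain ⟨gr, hgrm, hbgr, hgru⟩ := edges_at_end r hr hlr
  have hedpq : ∀ g, g ∈ p.edges → g ∈ q.edges → False :=
    paths_edge_disjoint hab hp hq hpq hdpq
  have hedpr : ∀ g, g ∈ p.edges → g ∈ r.edges → False :=
    paths_edge_disjoint hab hp hr hpr hdpr
  have hedqr : ∀ g, g ∈ q.edges → g ∈ r.edges → False :=
    paths_edge_disjoint hab hq hr hqr hdqr
  obtain ⟨a₁, a₂, a₃, ha12, ha13, ha23, haF1, haF2, haG3, haNF3, haclassG, haclassF⟩ :=
    vstruct hG hle hreg a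
  obtain ⟨b₁, b₂, b₃, hb12, hb13, hb23, hbF1, hbF2, hbG3, hbNF3, hbclassG, hbclassF⟩ :=
    vstruct hG hle hreg b
  -- a is unmatched
  have hmaF : ¬ ∃ e ∈ M, a ∈ e := by
    rintro ⟨em, hemM, haem⟩
    obtain ⟨wm, hFwm, rfl⟩ := edge_form (hM.1 hemM) haem
    obtain ⟨x₁, hx₁, hfpe⟩ := edge_form (p.edges_subset_edgeSet hfpm) hafp
    obtain ⟨x₂, hx₂, hfqe⟩ := edge_form (q.edges_subset_edgeSet hfqm) hafq
    obtain ⟨x₃, hx₃, hfre⟩ := edge_form (r.edges_subset_edgeSet hfrm) hafr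
    have hx12 : x₁ ≠ x₂ := fun h =>
      hedpq fp hfpm (by rw [hfpe, h, ← hfqe]; exact hfqm)
    have hx13 : x₁ ≠ x₃ := fun h =>
      hedpr fp hfpm (by rw [hfpe, h, ← hfre]; exact hfrm)
    have hx23 : x₂ ≠ x₃ := fun h =>
      hedqr fq hfqm (by rw [hfqe, h, ← hfre]; exact hfrm)
    have h1w : x₁ ≠ wm := fun h =>
      (hHedge (p.edges_subset_edgeSet hfpm)).2 (by rw [hfpe, h]; exact hemM)
    have h2w : x₂ ≠ wm := fun h =>
      (hHedge (q.edges_subset_edgeSet hfqm)).2 (by rw [hfqe, h]; exact hemM)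
    have h3w : x₃ ≠ wm := fun h =>
      (hHedge (r.edges_subset_edgeSet hfrm)).2 (by rw [hfre, h]; exact hemM)
    exact pigeon_four hx12 hx13 hx23 h1w h2w h3w
      (haclassG x₁ (hHle hx₁)) (haclassG x₂ (hHle hx₂)) (haclassG x₃ (hHle hx₃))
      ((haclassF wm hFwm).elim Or.inl (fun h => Or.inr (Or.inl h)))
  -- b is unmatched
  have hmbF : ¬ ∃ e ∈ M, b ∈ e := by
    rintro ⟨em, hemM, hbem⟩
    obtain ⟨wm, hFwm, rfl⟩ := edge_form (hM.1 hemM) hbem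
    obtain ⟨x₁, hx₁, hgpe⟩ := edge_form (p.edges_subset_edgeSet hgpm) hbgp
    obtain ⟨x₂, hx₂, hgqe⟩ := edge_form (q.edges_subset_edgeSet hgqm) hbgq
    obtain ⟨x₃, hx₃, hgre⟩ := edge_form (r.edges_subset_edgeSet hgrm) hbgr
    have hx12 : x₁ ≠ x₂ := fun h =>
      hedpq gp hgpm (by rw [hgpe, h, ← hgqe]; exact hgqm)
    have hx13 : x₁ ≠ x₃ := fun h =>
      hedpr gp hgpm (by rw [hgpe, h, ← hgre]; exact hgrm)
    have hx23 : x₂ ≠ x₃ := fun h =>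
      hedqr gq hgqm (by rw [hgqe, h, ← hgre]; exact hgrm)
    have h1w : x₁ ≠ wm := fun h =>
      (hHedge (p.edges_subset_edgeSet hgpm)).2 (by rw [hgpe, h]; exact hemM)
    have h2w : x₂ ≠ wm := fun h =>
      (hHedge (q.edges_subset_edgeSet hgqm)).2 (by rw [hgqe, h]; exact hemM)
    have h3w : x₃ ≠ wm := fun h =>
      (hHedge (r.edges_subset_edgeSet hgrm)).2 (by rw [hgre, h]; exact hemM)
    exact pigeon_four hx12 hx13 hx23 h1w h2w h3w
      (hbclassG x₁ (hHle hx₁)) (hbclassG x₂ (hHle hx₂)) (hbclassG x₃ (hHle hx₃))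
      ((hbclassF wm hFwm).elim Or.inl (fun h => Or.inr (Or.inl h)))
  -- any unmatched vertex of the component is a or b
  have hunm_ab : ∀ v ∈ c.supp, (¬ ∃ e ∈ M, v ∈ e) → v = a ∨ v = b := by
    intro v hv hm
    by_contra hcon
    push_neg at hcon
    obtain ⟨hva, hvb⟩ := hcon
    obtain ⟨u₁, u₂, u₃, h12, h13, h23, hF1, hF2, hG3, hNF3, hclassG, hclassF⟩ :=
      vstruct hG hle hreg v
    have hM1 : s(v,u₁) ∉ M := fun h => hm ⟨_, h, Sym2.mem_mk_left _ _⟩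
    have hM2 : s(v,u₂) ∉ M := fun h => hm ⟨_, h, Sym2.mem_mk_left _ _⟩
    have hM3 : s(v,u₃) ∉ M := fun h => hm ⟨_, h, Sym2.mem_mk_left _ _⟩
    have hH1 : H.Adj v u₁ := by
      rw [hH, SimpleGraph.deleteEdges_adj]; exact ⟨hle hF1, hM1⟩
    have hH2 : H.Adj v u₂ := by
      rw [hH, SimpleGraph.deleteEdges_adj]; exact ⟨hle hF2, hM2⟩
    have hH3 : H.Adj v u₃ := by
      rw [hH, SimpleGraph.deleteEdges_adj]; exact ⟨hG3, hM3⟩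
    have hEi : ∀ u, H.Adj v u → s(v,u) ∈ p.edges ∨ s(v,u) ∈ q.edges ∨ s(v,u) ∈ r.edges :=
      fun u h => hcov _ (H.mem_edgeSet.mpr h) ⟨v, Sym2.mem_mk_left _ _, hv⟩
    have hvsup : v ∈ p.support ∨ v ∈ q.support ∨ v ∈ r.support := by
      have := hv
      rw [hsupp] at this
      exact this
    have key : ∀ (T T' T'' : H.Walk a b), T.IsPath →
        (∀ w ∈ T.support, w ∈ T'.support → w = a ∨ w = b) →
        (∀ w ∈ T.support, w ∈ T''.support → w = a ∨ w = b) →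
        (∀ g : Sym2 V, (g ∈ p.edges ∨ g ∈ q.edges ∨ g ∈ r.edges) →
          g ∈ T.edges ∨ g ∈ T'.edges ∨ g ∈ T''.edges) →
        v ∈ T.support → False := by
      intro T T' T'' hT hd' hd'' hperm hvT
      obtain ⟨e, f, hem, hfm, hef, hve, hvf, hcl⟩ := edges_at_interior T hT v hvT hva hvb
      have hin : ∀ u, H.Adj v u → s(v,u) = e ∨ s(v,u) = f := by
        intro u hu
        rcases hperm _ (hEi u hu) with h | h | h
        · exact hcl _ h (Sym2.mem_mk_left _ _)
        · rcases hd' v hvT (mem_support_of_mem_edges' T' h (Sym2.mem_mk_left _ _)) with rfl | rfl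
          · exact absurd rfl hva
          · exact absurd rfl hvb
        · rcases hd'' v hvT (mem_support_of_mem_edges' T'' h (Sym2.mem_mk_left _ _)) with rfl | rfl
          · exact absurd rfl hva
          · exact absurd rfl hvb
      exact pigeon_three_two
        (fun h => h12 (Sym2.congr_right.mp h))
        (fun h => h13 (Sym2.congr_right.mp h))
        (fun h => h23 (Sym2.congr_right.mp h))
        (hin u₁ hH1) (hin u₂ hH2) (hin u₃ hH3)
    rcases hvsup with h | h | h
    · exact key p q r hp hdpq hdpr (fun g hg => hg) h
    · exact key q p r hq (fun w hw hw' => hdpq w hw' hw) hdqr (fun g hg => by tauto) h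
    · exact key r p q hr (fun w hw hw' => hdpr w hw' hw) (fun w hw hw' => hdqr w hw' hw)
        (fun g hg => by tauto) h
  -- SN / EN analysis
  have haM3 : s(a,a₃) ∉ M := fun h => haNF3 (F.mem_edgeSet.mp (hM.1 h))
  have haH3 : H.Adj a a₃ := by
    rw [hH, SimpleGraph.deleteEdges_adj]; exact ⟨haG3, haM3⟩
  have haE3F : s(a,a₃) ∉ F.edgeSet := fun h => haNF3 (F.mem_edgeSet.mp h)
  have hbM3 : s(b,b₃) ∉ M := fun h => hbNF3 (F.mem_edgeSet.mp (hM.1 h))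
  have hbH3 : H.Adj b b₃ := by
    rw [hH, SimpleGraph.deleteEdges_adj]; exact ⟨hbG3, hbM3⟩
  have hbE3F : s(b,b₃) ∉ F.edgeSet := fun h => hbNF3 (F.mem_edgeSet.mp h)
  have hSNe : (∃ g ∈ p.edges, a ∈ g ∧ g ∉ F.edgeSet) ∨ (∃ g ∈ q.edges, a ∈ g ∧ g ∉ F.edgeSet) ∨
      (∃ g ∈ r.edges, a ∈ g ∧ g ∉ F.edgeSet) := by
    rcases hcov s(a,a₃) (H.mem_edgeSet.mpr haH3) ⟨a, Sym2.mem_mk_left _ _, hac⟩ with h | h | h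
    · exact Or.inl ⟨_, h, Sym2.mem_mk_left _ _, haE3F⟩
    · exact Or.inr (Or.inl ⟨_, h, Sym2.mem_mk_left _ _, haE3F⟩)
    · exact Or.inr (Or.inr ⟨_, h, Sym2.mem_mk_left _ _, haE3F⟩)
  have hSNwit : ∀ (T : H.Walk a b), ∀ g ∈ T.edges, a ∈ g → g ∉ F.edgeSet → g = s(a,a₃) := by
    intro T g hgT hag hgF
    obtain ⟨u, hu, rfl⟩ := edge_form (T.edges_subset_edgeSet hgT) hag
    rcases haclassG u (hHle hu) with rfl | rfl | rfl
    · exact absurd (F.mem_edgeSet.mpr haF1) hgF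
    · exact absurd (F.mem_edgeSet.mpr haF2) hgF
    · rfl
  have hENwit : ∀ (T : H.Walk a b), ∀ g ∈ T.edges, b ∈ g → g ∉ F.edgeSet → g = s(b,b₃) := by
    intro T g hgT hbg hgF
    obtain ⟨u, hu, rfl⟩ := edge_form (T.edges_subset_edgeSet hgT) hbg
    rcases hbclassG u (hHle hu) with rfl | rfl | rfl
    · exact absurd (F.mem_edgeSet.mpr hbF1) hgF
    · exact absurd (F.mem_edgeSet.mpr hbF2) hgF
    · rfl
  have hENe : (∃ g ∈ p.edges, b ∈ g ∧ g ∉ F.edgeSet) ∨ (∃ g ∈ q.edges, b ∈ g ∧ g ∉ F.edgeSet) ∨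
      (∃ g ∈ r.edges, b ∈ g ∧ g ∉ F.edgeSet) := by
    rcases hcov s(b,b₃) (H.mem_edgeSet.mpr hbH3) ⟨b, Sym2.mem_mk_left _ _, hbc⟩ with h | h | h
    · exact Or.inl ⟨_, h, Sym2.mem_mk_left _ _, hbE3F⟩
    · exact Or.inr (Or.inl ⟨_, h, Sym2.mem_mk_left _ _, hbE3F⟩)
    · exact Or.inr (Or.inr ⟨_, h, Sym2.mem_mk_left _ _, hbE3F⟩)
  have hSNu : ¬((∃ g ∈ p.edges, a ∈ g ∧ g ∉ F.edgeSet) ∧ (∃ g ∈ q.edges, a ∈ g ∧ g ∉ F.edgeSet)) ∧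
      ¬((∃ g ∈ p.edges, a ∈ g ∧ g ∉ F.edgeSet) ∧ (∃ g ∈ r.edges, a ∈ g ∧ g ∉ F.edgeSet)) ∧
      ¬((∃ g ∈ q.edges, a ∈ g ∧ g ∉ F.edgeSet) ∧ (∃ g ∈ r.edges, a ∈ g ∧ g ∉ F.edgeSet)) := by
    refine ⟨?_, ?_, ?_⟩
    · rintro ⟨⟨g, hg, hag, hgF⟩, ⟨g', hg', hag', hg'F⟩⟩
      exact hedpq _ hg (by rw [hSNwit p g hg hag hgF, ← hSNwit q g' hg' hag' hg'F]; exact hg')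
    · rintro ⟨⟨g, hg, hag, hgF⟩, ⟨g', hg', hag', hg'F⟩⟩
      exact hedpr _ hg (by rw [hSNwit p g hg hag hgF, ← hSNwit r g' hg' hag' hg'F]; exact hg')
    · rintro ⟨⟨g, hg, hag, hgF⟩, ⟨g', hg', hag', hg'F⟩⟩
      exact hedqr _ hg (by rw [hSNwit q g hg hag hgF, ← hSNwit r g' hg' hag' hg'F]; exact hg')
  have hENu : ¬((∃ g ∈ p.edges, b ∈ g ∧ g ∉ F.edgeSet) ∧ (∃ g ∈ q.edges, b ∈ g ∧ g ∉ F.edgeSet)) ∧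
      ¬((∃ g ∈ p.edges, b ∈ g ∧ g ∉ F.edgeSet) ∧ (∃ g ∈ r.edges, b ∈ g ∧ g ∉ F.edgeSet)) ∧
      ¬((∃ g ∈ q.edges, b ∈ g ∧ g ∉ F.edgeSet) ∧ (∃ g ∈ r.edges, b ∈ g ∧ g ∉ F.edgeSet)) := by
    refine ⟨?_, ?_, ?_⟩
    · rintro ⟨⟨g, hg, hbg, hgF⟩, ⟨g', hg', hbg', hg'F⟩⟩
      exact hedpq _ hg (by rw [hENwit p g hg hbg hgF, ← hENwit q g' hg' hbg' hg'F]; exact hg')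
    · rintro ⟨⟨g, hg, hbg, hgF⟩, ⟨g', hg', hbg', hg'F⟩⟩
      exact hedpr _ hg (by rw [hENwit p g hg hbg hgF, ← hENwit r g' hg' hbg' hg'F]; exact hg')
    · rintro ⟨⟨g, hg, hbg, hgF⟩, ⟨g', hg', hbg', hg'F⟩⟩
      exact hedqr _ hg (by rw [hENwit q g hg hbg hgF, ← hENwit r g' hg' hbg' hg'F]; exact hg')
  obtain ⟨P, Q, hPmem, hQmem, hPQ, hSNP, hSNQ, hENor⟩ :=
    choosePQ (SN := fun T : H.Walk a b => ∃ g ∈ T.edges, a ∈ g ∧ g ∉ F.edgeSet)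
      (EN := fun T : H.Walk a b => ∃ g ∈ T.edges, b ∈ g ∧ g ∉ F.edgeSet)
      hpq hpr hqr hSNe hSNu hENe hENu
  have hPpath : P.IsPath := by rcases hPmem with rfl | rfl | rfl; exacts [hp, hq, hr]
  have hQpath : Q.IsPath := by rcases hQmem with rfl | rfl | rfl; exacts [hp, hq, hr]
  have hPsub : ∀ x ∈ P.support, x ∈ c.supp := by
    rcases hPmem with rfl | rfl | rfl; exacts [hsubp, hsubq, hsubr]
  have hQsub : ∀ x ∈ Q.support, x ∈ c.supp := by
    rcases hQmem with rfl | rfl | rfl; exacts [hsubp, hsubq, hsubr]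
  have hdPQ : ∀ w ∈ P.support, w ∈ Q.support → w = a ∨ w = b := by
    rcases hPmem with rfl | rfl | rfl <;> rcases hQmem with rfl | rfl | rfl <;>
      first
        | exact absurd rfl hPQ
        | exact hdpq
        | exact hdpr
        | exact hdqr
        | exact fun w hw hw' => hdpq w hw' hw
        | exact fun w hw hw' => hdpr w hw' hw
        | exact fun w hw hw' => hdqr w hw' hw
  have hedPQ : ∀ g, g ∈ P.edges → g ∈ Q.edges → False :=
    paths_edge_disjoint hab hPpath hQpath hPQ hdPQ
  have hlP : 0 < P.length := Nat.pos_of_ne_zero fun h => hab (P.eq_of_length_eq_zero h)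
  have hlQ : 0 < Q.length := Nat.pos_of_ne_zero fun h => hab (Q.eq_of_length_eq_zero h)
  obtain ⟨eP, hePm, haeP, hePu⟩ := edges_at_start P hPpath hlP
  obtain ⟨eQ, heQm, haeQ, heQu⟩ := edges_at_start Q hQpath hlQ
  obtain ⟨lP, hlPm, hblP, hlPu⟩ := edges_at_end P hPpath hlP
  obtain ⟨lQ, hlQm, hblQ, hlQu⟩ := edges_at_end Q hQpath hlQ
  refine ⟨{g | g ∈ P.edges}, {g | g ∈ Q.edges}, ?_, ?_, ?_, ?_⟩
  · rintro e (he | he)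
    · exact ⟨P.edges_subset_edgeSet he,
        fun x hx => hPsub x (mem_support_of_mem_edges' P he hx)⟩
    · exact ⟨Q.edges_subset_edgeSet he,
        fun x hx => hQsub x (mem_support_of_mem_edges' Q he hx)⟩
  · exact fun e he₁ he₂ => (hedPQ e he₁ he₂).elim
  · intro v hvM
    have hva : v ≠ a := fun h => hmaF (h ▸ hvM)
    have hvb : v ≠ b := fun h => hmbF (h ▸ hvM)
    by_cases hvP : v ∈ P.support
    · have hvQ : v ∉ Q.support := fun h => by
        rcases hdPQ v hvP h with rfl | rfl
        · exact hva rfl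
        · exact hvb rfl
      obtain ⟨e, f, hem, hfm, hef, hve, hvf, hcl⟩ :=
        edges_at_interior P hPpath v hvP hva hvb
      obtain ⟨em, hemM, hvem⟩ := hvM
      obtain ⟨wm, hFwm, rfl⟩ := edge_form (hM.1 hemM) hvem
      obtain ⟨u₁, u₂, u₃, h12, h13, h23, hF1, hF2, hG3, hNF3, hclassG, hclassF⟩ :=
        vstruct hG hle hreg v
      obtain ⟨x, hxadj, rfl⟩ := edge_form (P.edges_subset_edgeSet hem) hve
      obtain ⟨y, hyadj, rfl⟩ := edge_form (P.edges_subset_edgeSet hfm) hvf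
      have hxy : x ≠ y := fun h => hef (by rw [h])
      have hxw : x ≠ wm := fun h =>
        (hHedge (P.edges_subset_edgeSet hem)).2 (by rw [h]; exact hemM)
      have hyw : y ≠ wm := fun h =>
        (hHedge (P.edges_subset_edgeSet hfm)).2 (by rw [h]; exact hemM)
      right
      rcases order_pair h12 h13 h23 hF1 hF2 hNF3 hclassG hclassF hFwm
          (hHle hxadj) (hHle hyadj) hxy hxw hyw with ⟨hFx, hNFy⟩ | ⟨hFy, hNFx⟩
      · refine ⟨s(v,x), s(v,y), Or.inl ⟨hem, hfm⟩, F.mem_edgeSet.mpr hFx,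
          fun h => hNFy (F.mem_edgeSet.mp h), Sym2.mem_mk_left _ _, Sym2.mem_mk_left _ _, ?_⟩
        rintro g (hg | hg) hvg
        · exact hcl g hg hvg
        · exact absurd (mem_support_of_mem_edges' Q hg hvg) hvQ
      · refine ⟨s(v,y), s(v,x), Or.inl ⟨hfm, hem⟩, F.mem_edgeSet.mpr hFy,
          fun h => hNFx (F.mem_edgeSet.mp h), Sym2.mem_mk_left _ _, Sym2.mem_mk_left _ _, ?_⟩
        rintro g (hg | hg) hvg
        · exact (hcl g hg hvg).elim Or.inr Or.inl
        · exact absurd (mem_support_of_mem_edges' Q hg hvg) hvQ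
    · by_cases hvQ : v ∈ Q.support
      · obtain ⟨e, f, hem, hfm, hef, hve, hvf, hcl⟩ :=
          edges_at_interior Q hQpath v hvQ hva hvb
        obtain ⟨em, hemM, hvem⟩ := hvM
        obtain ⟨wm, hFwm, rfl⟩ := edge_form (hM.1 hemM) hvem
        obtain ⟨u₁, u₂, u₃, h12, h13, h23, hF1, hF2, hG3, hNF3, hclassG, hclassF⟩ :=
          vstruct hG hle hreg v
        obtain ⟨x, hxadj, rfl⟩ := edge_form (Q.edges_subset_edgeSet hem) hve
        obtain ⟨y, hyadj, rfl⟩ := edge_form (Q.edges_subset_edgeSet hfm) hvf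
        have hxy : x ≠ y := fun h => hef (by rw [h])
        have hxw : x ≠ wm := fun h =>
          (hHedge (Q.edges_subset_edgeSet hem)).2 (by rw [h]; exact hemM)
        have hyw : y ≠ wm := fun h =>
          (hHedge (Q.edges_subset_edgeSet hfm)).2 (by rw [h]; exact hemM)
        right
        rcases order_pair h12 h13 h23 hF1 hF2 hNF3 hclassG hclassF hFwm
            (hHle hxadj) (hHle hyadj) hxy hxw hyw with ⟨hFx, hNFy⟩ | ⟨hFy, hNFx⟩
        · refine ⟨s(v,x), s(v,y), Or.inr ⟨hem, hfm⟩, F.mem_edgeSet.mpr hFx,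
            fun h => hNFy (F.mem_edgeSet.mp h), Sym2.mem_mk_left _ _, Sym2.mem_mk_left _ _, ?_⟩
          rintro g (hg | hg) hvg
          · exact absurd (mem_support_of_mem_edges' P hg hvg) hvP
          · exact hcl g hg hvg
        · refine ⟨s(v,y), s(v,x), Or.inr ⟨hfm, hem⟩, F.mem_edgeSet.mpr hFy,
            fun h => hNFx (F.mem_edgeSet.mp h), Sym2.mem_mk_left _ _, Sym2.mem_mk_left _ _, ?_⟩
          rintro g (hg | hg) hvg
          · exact absurd (mem_support_of_mem_edges' P hg hvg) hvP
          · exact (hcl g hg hvg).elim Or.inr Or.inl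
      · left
        rintro g (hg | hg) hvg
        · exact hvP (mem_support_of_mem_edges' P hg hvg)
        · exact hvQ (mem_support_of_mem_edges' Q hg hvg)
  · intro v hvc hvm
    rcases hunm_ab v hvc hvm with rfl | rfl
    · refine ⟨eP, eQ, hePm, heQm, haeP, haeQ, ?_,
        fun g hg hag => hePu g hg hag, fun g hg hag => heQu g hg hag⟩
      have hePF : eP ∉ F.edgeSet := by
        obtain ⟨g, hgm, hag, hgF⟩ := hSNP
        rwa [hePu g hgm hag] at hgF
      have heQF : eQ ∈ F.edgeSet := by
        by_contra h
        exact hSNQ ⟨eQ, heQm, haeQ, h⟩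
      exact iff_of_false hePF (not_not_intro heQF)
    · refine ⟨lP, lQ, hlPm, hlQm, hblP, hblQ, ?_,
        fun g hg hbg => hlPu g hg hbg, fun g hg hbg => hlQu g hg hbg⟩
      rcases hENor with ⟨hEP, hEQ⟩ | ⟨hEP, hEQ⟩
      · have h1 : lP ∉ F.edgeSet := by
          obtain ⟨g, hgm, hbg, hgF⟩ := hEP
          rwa [hlPu g hgm hbg] at hgF
        have h2 : lQ ∈ F.edgeSet := by
          by_contra h
          exact hEQ ⟨lQ, hlQm, hblQ, h⟩
        exact iff_of_false h1 (not_not_intro h2)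
      · have h1 : lP ∈ F.edgeSet := by
          by_contra h
          exact hEP ⟨lP, hlPm, hblP, h⟩
        have h2 : lQ ∉ F.edgeSet := by
          obtain ⟨g, hgm, hbg, hgF⟩ := hEQ
          rwa [hlQu g hgm hbg] at hgF
        exact iff_of_true h1 h2

lemma exists_shiftSetup {G F : SimpleGraph V} {M : Set (Sym2 V)}
    (hG : IsCubic G) (hle : F ≤ G) (hreg : ∀ v, (F.neighborSet v).ncard = 2)
    (hM : IsMatchingIn M F)
    (hmain : ∀ C : (G.deleteEdges M).ConnectedComponent,
      (∃ v ∈ C.supp, IsThreeVertex (G.deleteEdges M) v) →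
        IsThetaOn (G.deleteEdges M) C.supp) :
    ∃ S₁ S₂ : Set (Sym2 V), ShiftSetup G F M S₁ S₂ := by
  classical
  have hsel : ∀ c : (G.deleteEdges M).ConnectedComponent,
      ∃ SS : Set (Sym2 V) × Set (Sym2 V),
        LocalGood F (G.deleteEdges M) M c SS.1 SS.2 ∨
        (SS = (∅, ∅) ∧ ¬ ∃ v ∈ c.supp, IsThreeVertex (G.deleteEdges M) v) := by
    intro c
    by_cases h : ∃ v ∈ c.supp, IsThreeVertex (G.deleteEdges M) v
    · obtain ⟨S₁, S₂, hLG⟩ := perComponent rfl hG hle hreg hM c (hmain c h)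
      exact ⟨(S₁, S₂), Or.inl hLG⟩
    · exact ⟨(∅, ∅), Or.inr ⟨rfl, h⟩⟩
  choose SS hSS using hsel
  have hHsub : ∀ {e : Sym2 V}, e ∈ (G.deleteEdges M).edgeSet → e ∈ G.edgeSet ∧ e ∉ M := by
    intro e he
    rw [SimpleGraph.edgeSet_deleteEdges] at he
    exact he
  have hkey : ∀ (c : (G.deleteEdges M).ConnectedComponent) (e : Sym2 V),
      e ∈ (SS c).1 ∪ (SS c).2 → LocalGood F (G.deleteEdges M) M c (SS c).1 (SS c).2 := by
    intro c e he
    rcases hSS c with h | ⟨hemp, _⟩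
    · exact h
    · rw [hemp] at he
      simp at he
  have hloc : ∀ (c : (G.deleteEdges M).ConnectedComponent) (g : Sym2 V),
      g ∈ (SS c).1 ∪ (SS c).2 → ∀ v ∈ g, c = (G.deleteEdges M).connectedComponentMk v := by
    intro c g hg v hvg
    have h1 := ((hkey c g hg).1 g hg).2 v hvg
    exact ((SimpleGraph.ConnectedComponent.mem_supp_iff c v).mp h1).symm
  refine ⟨⋃ c, (SS c).1, ⋃ c, (SS c).2, ?_, ?_, ?_, ?_, ?_⟩
  · rintro e (he | he) <;> rw [Set.mem_iUnion] at he <;> obtain ⟨c, hc⟩ := he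
    · exact (hHsub (((hkey c e (Or.inl hc)).1 e (Or.inl hc)).1)).1
    · exact (hHsub (((hkey c e (Or.inr hc)).1 e (Or.inr hc)).1)).1
  · rintro e (he | he) <;> rw [Set.mem_iUnion] at he <;> obtain ⟨c, hc⟩ := he
    · exact (hHsub (((hkey c e (Or.inl hc)).1 e (Or.inl hc)).1)).2
    · exact (hHsub (((hkey c e (Or.inr hc)).1 e (Or.inr hc)).1)).2
  · intro e he₁ he₂
    rw [Set.mem_iUnion] at he₁ he₂
    obtain ⟨c₁, hc₁⟩ := he₁
    obtain ⟨c₂, hc₂⟩ := he₂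
    obtain ⟨x, hx⟩ : ∃ x, x ∈ e := ⟨e.out.1, Sym2.out_fst_mem e⟩
    have h1 : c₁ = (G.deleteEdges M).connectedComponentMk x := hloc c₁ e (Or.inl hc₁) x hx
    have h2 : c₂ = (G.deleteEdges M).connectedComponentMk x := hloc c₂ e (Or.inr hc₂) x hx
    have hcc : c₁ = c₂ := h1.trans h2.symm
    subst hcc
    exact (hkey c₁ e (Or.inl hc₁)).2.1 e hc₁ hc₂
  · intro v hm
    rcases hSS ((G.deleteEdges M).connectedComponentMk v) with hLG | ⟨hemp, _⟩
    · rcases hLG.2.2.1 v hm with hnone | ⟨e, f, hside, heF, hfF, hve, hvf, huniq⟩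
      · left
        rintro g (hg | hg) hvg <;> rw [Set.mem_iUnion] at hg <;> obtain ⟨c, hc⟩ := hg
        · have hcv := hloc c g (Or.inl hc) v hvg
          exact hnone g (Or.inl (hcv ▸ hc)) hvg
        · have hcv := hloc c g (Or.inr hc) v hvg
          exact hnone g (Or.inr (hcv ▸ hc)) hvg
      · right
        refine ⟨e, f, ?_, heF, hfF, hve, hvf, ?_⟩
        · rcases hside with ⟨h1, h2⟩ | ⟨h1, h2⟩
          · exact Or.inl ⟨Set.mem_iUnion.mpr ⟨_, h1⟩, Set.mem_iUnion.mpr ⟨_, h2⟩⟩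
          · exact Or.inr ⟨Set.mem_iUnion.mpr ⟨_, h1⟩, Set.mem_iUnion.mpr ⟨_, h2⟩⟩
        · rintro g (hg | hg) hvg <;> rw [Set.mem_iUnion] at hg <;> obtain ⟨c, hc⟩ := hg
          · have hcv := hloc c g (Or.inl hc) v hvg
            exact huniq g (Or.inl (hcv ▸ hc)) hvg
          · have hcv := hloc c g (Or.inr hc) v hvg
            exact huniq g (Or.inr (hcv ▸ hc)) hvg
    · left
      rintro g (hg | hg) hvg <;> rw [Set.mem_iUnion] at hg <;> obtain ⟨c, hc⟩ := hg
      · have hcv := hloc c g (Or.inl hc) v hvg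
        have : g ∈ (SS ((G.deleteEdges M).connectedComponentMk v)).1 := hcv ▸ hc
        rw [hemp] at this
        simp at this
      · have hcv := hloc c g (Or.inr hc) v hvg
        have : g ∈ (SS ((G.deleteEdges M).connectedComponentMk v)).2 := hcv ▸ hc
        rw [hemp] at this
        simp at this
  · intro v hm
    have h3 : IsThreeVertex (G.deleteEdges M) v := unmatched_threeVertex hG hm
    have hvc : v ∈ ((G.deleteEdges M).connectedComponentMk v).supp :=
      (SimpleGraph.ConnectedComponent.mem_supp_iff _ _).mpr rfl
    rcases hSS ((G.deleteEdges M).connectedComponentMk v) with hLG | ⟨_, hno⟩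
    · obtain ⟨e, f, he1, hf2, hve, hvf, hiff, hu1, hu2⟩ := hLG.2.2.2 v hvc hm
      refine ⟨e, f, Set.mem_iUnion.mpr ⟨_, he1⟩, Set.mem_iUnion.mpr ⟨_, hf2⟩,
        hve, hvf, hiff, ?_, ?_⟩
      · intro g hg hvg
        rw [Set.mem_iUnion] at hg
        obtain ⟨c, hc⟩ := hg
        have hcv := hloc c g (Or.inl hc) v hvg
        exact hu1 g (hcv ▸ hc) hvg
      · intro g hg hvg
        rw [Set.mem_iUnion] at hg
        obtain ⟨c, hc⟩ := hg
        have hcv := hloc c g (Or.inr hc) v hvg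
        exact hu2 g (hcv ▸ hc) hvg
    · exact absurd ⟨v, hvc, h3⟩ hno
end S3

-- STATEMENT 3
theorem statement3 {V : Type*} [Fintype V] (G F : SimpleGraph V) (M : Set (Sym2 V))
    (hG : IsSnark G) (hodd : oddness G = 2)
    (hF : IsTwoFactor G F) (hFodd : oddCompCount F = 2)
    (hM : IsMaximumMatchingIn M F)
    (hmain : ∀ C : (G.deleteEdges M).ConnectedComponent,
      (∃ v ∈ C.supp, IsThreeVertex (G.deleteEdges M) v) →
        IsThetaOn (G.deleteEdges M) C.supp) :
    ∃ σ : Sym2 V → ZMod 4 × ZMod 2, IsProperAbelianColoring G σ := by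
  obtain ⟨hle, hreg⟩ := hF
  obtain ⟨S₁, S₂, hs⟩ := S3.exists_shiftSetup hG.2.2.1 hle hreg hM.1 hmain
  exact S3.coloring_of_shiftSetup hG.2.2.1 hle hreg hM.1 hs
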